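/- Let f be a rational map of the Riemann sphere of degree d ≥ 2, and suppose E ⊆ OnePoint ℂ is a finite set that is completely invariant under f (f ⁻¹' E = E and f '' E = E). Then E has at most two elements. -/

import Mathlib

open Polynomial Set Metric Filter MeasureTheory

noncomputable instance : UniformSpace (OnePoint ℂ) := uniformSpaceOfCompactR1

/-- `f` is a rational map of the Riemann sphere `OnePoint ℂ` of degree `d`:
`f` is continuous and given by `z ↦ P z / Q z` for coprime polynomials `P, Q`,
not both constant, with `Q ≠ 0` and `d = max (natDegree P) (natDegree Q)`. -/
def IsRationalMap (f : OnePoint ℂ → OnePoint ℂ) (d : ℕ) : Prop :=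
  Continuous f ∧ ∃ P Q : Polynomial ℂ, IsCoprime P Q ∧
    ¬(P.natDegree = 0 ∧ Q.natDegree = 0) ∧ Q ≠ 0 ∧ d = max P.natDegree Q.natDegree ∧
    ∀ z : ℂ, Q.eval z ≠ 0 → f (z : OnePoint ℂ) = ((P.eval z / Q.eval z : ℂ) : OnePoint ℂ)

/-- The Fatou set of `f` : the set of points having an open neighbourhood on which the family
of iterates of `f` is equicontinuous (w.r.t. the canonical uniformity of `OnePoint ℂ`). -/
def FatouSet (f : OnePoint ℂ → OnePoint ℂ) : Set (OnePoint ℂ) :=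
  {x | ∃ U : Set (OnePoint ℂ), IsOpen U ∧ x ∈ U ∧ EquicontinuousOn (fun n : ℕ => f^[n]) U}

/-- The Julia set of `f` : the complement of the Fatou set. -/
def JuliaSet (f : OnePoint ℂ → OnePoint ℂ) : Set (OnePoint ℂ) :=
  (FatouSet f)ᶜ

section RatMapAux
open Bornology Topology OnePoint

lemma eq_pow_of_roots_subset {R : ℂ[X]} {a : ℂ}
    (h : ∀ z : ℂ, R.eval z = 0 → z = a) :
    R = C R.leadingCoeff * (X - C a) ^ R.natDegree := by
  have hs : Multiset.card R.roots = R.natDegree :=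
    (splits_iff_card_roots).1 (IsAlgClosed.splits R)
  have hrep : R.roots = Multiset.replicate R.natDegree a := by
    rw [Multiset.eq_replicate]
    exact ⟨hs, fun b hb => h b (isRoot_of_mem_roots hb)⟩
  have := C_leadingCoeff_mul_prod_multiset_X_sub_C hs
  rw [hrep] at this
  simpa [Multiset.map_replicate, Multiset.prod_replicate] using this.symm

lemma wronskian_ne_zero {P Q : ℂ[X]} (hco : IsCoprime P Q)
    (hnc : ¬(P.natDegree = 0 ∧ Q.natDegree = 0)) :
    derivative P * Q - P * derivative Q ≠ 0 := by
  intro h0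
  have h : derivative P * Q = P * derivative Q := by linear_combination h0
  have hP : P ∣ derivative P :=
    hco.dvd_of_dvd_mul_right ⟨derivative Q, h⟩
  have hQ : Q ∣ derivative Q :=
    hco.symm.dvd_of_dvd_mul_right ⟨derivative P, by linear_combination -h⟩
  have hP0 : P.natDegree = 0 := by
    by_contra hne
    have hlt := natDegree_derivative_lt hne
    have hne' : derivative P ≠ 0 := fun hz => hne (natDegree_eq_zero_of_derivative_eq_zero hz)
    have := natDegree_le_of_dvd hP hne'
    omega
  have hQ0 : Q.natDegree = 0 := by
    by_contra hne
    have hlt := natDegree_derivative_lt hne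
    have hne' : derivative Q ≠ 0 := fun hz => hne (natDegree_eq_zero_of_derivative_eq_zero hz)
    have := natDegree_le_of_dvd hQ hne'
    omega
  exact hnc ⟨hP0, hQ0⟩

lemma pow_dvd_wronskian {c a : ℂ} {k : ℕ} (hk : 1 ≤ k) (R : ℂ[X]) :
    (X - C a) ^ (k - 1) ∣
      derivative (C c * (X - C a) ^ k) * R - (C c * (X - C a) ^ k) * derivative R := by
  obtain ⟨m, rfl⟩ : ∃ m, k = m + 1 := ⟨k - 1, by omega⟩
  refine ⟨C c * (C ((m : ℂ) + 1) * R - (X - C a) * derivative R), ?_⟩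
  rw [derivative_mul, derivative_C, derivative_pow, derivative_sub, derivative_X, derivative_C]
  simp only [Nat.add_sub_cancel, map_natCast, map_add, map_one, C_eq_natCast]
  push_cast
  ring

lemma natDegree_wronskian_le {P Q : ℂ[X]} {d : ℕ} (hd : 2 ≤ d)
    (hdeg : d = max P.natDegree Q.natDegree) :
    (derivative P * Q - P * derivative Q).natDegree ≤ 2 * d - 2 := by
  set p := P.natDegree with hp
  set q := Q.natDegree with hq
  by_cases hpq : p = q
  · -- p = q = d
    have hpd : p = d := by omega
    have hqd : q = d := by omega
    rw [natDegree_le_iff_coeff_eq_zero]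
    intro m hm
    have h1 : (derivative P * Q).natDegree ≤ 2 * d - 1 := by
      calc (derivative P * Q).natDegree ≤ (derivative P).natDegree + q := natDegree_mul_le
        _ ≤ (p - 1) + q := by have := natDegree_derivative_le P; omega
        _ ≤ 2 * d - 1 := by omega
    have h2 : (P * derivative Q).natDegree ≤ 2 * d - 1 := by
      calc (P * derivative Q).natDegree ≤ p + (derivative Q).natDegree := natDegree_mul_le
        _ ≤ p + (q - 1) := by have := natDegree_derivative_le Q; omega
        _ ≤ 2 * d - 1 := by omega
    rcases eq_or_lt_of_le (show 2 * d - 1 ≤ m by omega) with hm' | hm'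
    · -- m = 2d - 1 : coefficients cancel
      rw [coeff_sub, ← hm']
      have e1 : (derivative P * Q).coeff (2 * d - 1) = (derivative P).coeff (d - 1) * Q.coeff d := by
        have := coeff_mul_add_eq_of_natDegree_le (f := derivative P) (g := Q) (df := d - 1) (dg := d)
          (by have := natDegree_derivative_le P; omega) (by omega)
        rwa [show d - 1 + d = 2 * d - 1 by omega] at this
      have e2 : (P * derivative Q).coeff (2 * d - 1) = P.coeff d * (derivative Q).coeff (d - 1) := by
        have := coeff_mul_add_eq_of_natDegree_le (f := P) (g := derivative Q) (df := d) (dg := d - 1)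
          (by omega) (by have := natDegree_derivative_le Q; omega)
        rwa [show d + (d - 1) = 2 * d - 1 by omega] at this
      rw [e1, e2, coeff_derivative, coeff_derivative, show d - 1 + 1 = d by omega]
      push_cast
      ring
    · rw [coeff_sub, coeff_eq_zero_of_natDegree_lt (lt_of_le_of_lt h1 hm'),
        coeff_eq_zero_of_natDegree_lt (lt_of_le_of_lt h2 hm'), sub_zero]
  · -- p ≠ q
    refine le_trans (natDegree_sub_le _ _) ?_
    have hmax : max p q = d := hdeg.symm
    have h1 : (derivative P * Q).natDegree ≤ 2 * d - 2 := by
      refine le_trans natDegree_mul_le ?_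
      have := natDegree_derivative_le P
      rcases Nat.eq_zero_or_pos p with h0 | h0
      · simp only [hp ▸ h0] at this ⊢
        omega
      · omega
    have h2 : (P * derivative Q).natDegree ≤ 2 * d - 2 := by
      refine le_trans natDegree_mul_le ?_
      have := natDegree_derivative_le Q
      rcases Nat.eq_zero_or_pos q with h0 | h0
      · omega
      · omega
    omega

set_option maxHeartbeats 1000000 in

lemma tendsto_eval_div_pow_zero {A : ℂ[X]} {n : ℕ} (h : A.natDegree < n) :
    Tendsto (fun z : ℂ => A.eval z / z ^ n) (cobounded ℂ) (𝓝 0) := by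
  set Cc : ℝ := ∑ i ∈ Finset.range (A.natDegree + 1), ‖A.coeff i‖ with hCc
  have hb : ∀ᶠ z : ℂ in cobounded ℂ, ‖A.eval z / z ^ n‖ ≤ Cc / ‖z‖ := by
    filter_upwards [eventually_cobounded_le_norm 1] with z hz
    have hz0 : z ≠ 0 := by
      intro h0; rw [h0] at hz; simp at hz; linarith
    have hnorm : ‖A.eval z‖ ≤ Cc * ‖z‖ ^ (n - 1) := by
      rw [eval_eq_sum_range]
      refine le_trans (norm_sum_le _ _) ?_
      rw [hCc, Finset.sum_mul]
      refine Finset.sum_le_sum fun i hi => ?_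
      rw [norm_mul, norm_pow]
      refine mul_le_mul_of_nonneg_left ?_ (norm_nonneg _)
      exact pow_le_pow_right₀ hz (by
        have := Finset.mem_range.1 hi; omega)
    rw [norm_div, norm_pow, div_le_div_iff₀ (by positivity) (by positivity)]
    calc ‖A.eval z‖ * ‖z‖ ≤ (Cc * ‖z‖ ^ (n - 1)) * ‖z‖ := by
          exact mul_le_mul_of_nonneg_right hnorm (norm_nonneg _)
      _ ≤ Cc * ‖z‖ ^ n := by
          rw [mul_assoc, ← pow_succ]
          refine mul_le_mul_of_nonneg_left ?_ ?_
          · exact pow_le_pow_right₀ hz (by omega)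
          · positivity
  refine squeeze_zero_norm' hb ?_
  have : Tendsto (fun z : ℂ => ‖z‖) (cobounded ℂ) atTop := tendsto_norm_cobounded_atTop
  simpa using (tendsto_const_nhds (x := Cc)).div_atTop this

lemma tendsto_eval_div_pow {B : ℂ[X]} :
    Tendsto (fun z : ℂ => B.eval z / z ^ B.natDegree) (cobounded ℂ) (𝓝 B.leadingCoeff) := by
  have key := eraseLead_add_C_mul_X_pow B
  have h0 : Tendsto (fun z : ℂ => B.eraseLead.eval z / z ^ B.natDegree) (cobounded ℂ) (𝓝 0) := by
    rcases eq_or_ne B.eraseLead 0 with h | h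
    · simpa [h] using tendsto_const_nhds
    · rcases B.eraseLead_natDegree_lt_or_eraseLead_eq_zero with h' | h'
      · exact tendsto_eval_div_pow_zero h'
      · exact absurd h' h
  have heq : ∀ᶠ z : ℂ in cobounded ℂ, B.eval z / z ^ B.natDegree
      = B.eraseLead.eval z / z ^ B.natDegree + B.leadingCoeff := by
    filter_upwards [eventually_cobounded_le_norm 1] with z hz
    have hz0 : z ≠ 0 := by intro h0; rw [h0] at hz; simp at hz; linarith
    conv_lhs => rw [← key]
    simp only [eval_add, eval_mul, eval_C, eval_pow, eval_X]
    field_simp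
    rw [key]
    ring
  rw [tendsto_congr' heq]
  simpa using h0.add (tendsto_const_nhds (x := B.leadingCoeff))

lemma eventually_cobounded_ne {B : ℂ[X]} (hB : B ≠ 0) :
    ∀ᶠ z : ℂ in cobounded ℂ, B.eval z ≠ 0 := by
  have hfin : {z : ℂ | B.IsRoot z}.Finite := B.finite_setOf_isRoot hB
  have : {z : ℂ | B.IsRoot z}ᶜ ∈ cobounded ℂ := (Bornology.isBounded_def.1 hfin.isBounded)
  filter_upwards [this] with z hz
  exact hz

lemma eventually_cobounded_ne_zero : ∀ᶠ z : ℂ in cobounded ℂ, z ≠ 0 := by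
  have : ({0} : Set ℂ)ᶜ ∈ cobounded ℂ := Bornology.isBounded_def.1 (Set.finite_singleton (0:ℂ)).isBounded
  filter_upwards [this] with z hz
  simpa using hz

lemma tendsto_ratio_zero {A B : ℂ[X]} (hB : B ≠ 0) (h : A.natDegree < B.natDegree) :
    Tendsto (fun z : ℂ => A.eval z / B.eval z) (cobounded ℂ) (𝓝 0) := by
  have hlc : B.leadingCoeff ≠ 0 := leadingCoeff_ne_zero.2 hB
  have h1 := tendsto_eval_div_pow_zero (A := A) (n := B.natDegree) h
  have h2 := (tendsto_eval_div_pow (B := B)).inv₀ hlc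
  have heq : ∀ᶠ z : ℂ in cobounded ℂ, A.eval z / B.eval z
      = (A.eval z / z ^ B.natDegree) * (B.eval z / z ^ B.natDegree)⁻¹ := by
    filter_upwards [eventually_cobounded_ne hB, eventually_cobounded_ne_zero] with z h1 h2
    field_simp
  rw [tendsto_congr' heq]
  simpa using h1.mul h2

lemma tendsto_ratio_atTop {A B : ℂ[X]} (hA : A ≠ 0) (hB : B ≠ 0) (h : B.natDegree < A.natDegree) :
    Tendsto (fun z : ℂ => ‖A.eval z / B.eval z‖) (cobounded ℂ) atTop := by
  have hlcA : A.leadingCoeff ≠ 0 := leadingCoeff_ne_zero.2 hA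
  have hlcB : B.leadingCoeff ≠ 0 := leadingCoeff_ne_zero.2 hB
  have h1 : Tendsto (fun z : ℂ => ‖A.eval z / z ^ A.natDegree‖ * ‖B.eval z / z ^ B.natDegree‖⁻¹)
      (cobounded ℂ) (𝓝 (‖A.leadingCoeff‖ * ‖B.leadingCoeff‖⁻¹)) := by
    exact ((tendsto_eval_div_pow.norm)).mul ((tendsto_eval_div_pow.norm).inv₀ (by simpa using hlcB))
  have h2 : Tendsto (fun z : ℂ => ‖z‖ ^ (A.natDegree - B.natDegree)) (cobounded ℂ) atTop :=
    (tendsto_pow_atTop (by omega : A.natDegree - B.natDegree ≠ 0)).comp tendsto_norm_cobounded_atTop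
  have hpos : 0 < ‖A.leadingCoeff‖ * ‖B.leadingCoeff‖⁻¹ := mul_pos (norm_pos_iff.2 hlcA) (inv_pos.2 (norm_pos_iff.2 hlcB))
  have heq : ∀ᶠ z : ℂ in cobounded ℂ, ‖A.eval z / B.eval z‖
      = (‖A.eval z / z ^ A.natDegree‖ * ‖B.eval z / z ^ B.natDegree‖⁻¹) * ‖z‖ ^ (A.natDegree - B.natDegree) := by
    filter_upwards [eventually_cobounded_ne hB, eventually_cobounded_ne_zero] with z hzB hz0
    rw [← norm_pow, ← norm_inv, ← norm_mul, ← norm_mul]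
    congr 1
    have hzp : (z : ℂ) ^ B.natDegree ≠ 0 := pow_ne_zero _ hz0
    have hzq : (z : ℂ) ^ A.natDegree ≠ 0 := pow_ne_zero _ hz0
    field_simp
    obtain ⟨k, hk⟩ : ∃ k, A.natDegree = k + B.natDegree := ⟨A.natDegree - B.natDegree, by omega⟩
    rw [show A.natDegree - B.natDegree = k by omega, hk, pow_add]
    ring
  rw [tendsto_congr' heq]
  exact Tendsto.pos_mul_atTop hpos h1 h2

lemma cobounded_eq_coclosed : coclosedCompact ℂ = cobounded ℂ := by
  rw [coclosedCompact_eq_cocompact, ← Metric.cobounded_eq_cocompact]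

-- value of f at infinity
lemma f_infty_eq {f : OnePoint ℂ → OnePoint ℂ} {P Q : ℂ[X]} (hfc : Continuous f) (hQ : Q ≠ 0)
    (heval : ∀ z : ℂ, Q.eval z ≠ 0 → f (z : OnePoint ℂ) = ((P.eval z / Q.eval z : ℂ) : OnePoint ℂ))
    {L : OnePoint ℂ}
    (hL : Tendsto (fun z : ℂ => ((P.eval z / Q.eval z : ℂ) : OnePoint ℂ)) (cobounded ℂ) (𝓝 L)) :
    f ∞ = L := by
  have hcoe : Tendsto ((↑·) : ℂ → OnePoint ℂ) (cobounded ℂ) (𝓝 ∞) := by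
    rw [← cobounded_eq_coclosed]; exact tendsto_coe_infty
  have h1 : Tendsto (fun z : ℂ => f ↑z) (cobounded ℂ) (𝓝 (f ∞)) :=
    (hfc.tendsto ∞).comp hcoe
  have h2 : Tendsto (fun z : ℂ => f ↑z) (cobounded ℂ) (𝓝 L) := by
    refine hL.congr' ?_
    filter_upwards [eventually_cobounded_ne hQ] with z hz
    exact (heval z hz).symm
  exact tendsto_nhds_unique h1 h2

lemma eventually_ne_punctured {Q : ℂ[X]} (hQ : Q ≠ 0) (z₀ : ℂ) :
    ∀ᶠ z : ℂ in 𝓝[≠] z₀, Q.eval z ≠ 0 := by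
  have hfin : ({z : ℂ | Q.IsRoot z} \ {z₀}).Finite := (Q.finite_setOf_isRoot hQ).diff
  have hcl : IsClosed ({z : ℂ | Q.IsRoot z} \ {z₀}) := hfin.isClosed
  have hz₀ : z₀ ∈ ({z : ℂ | Q.IsRoot z} \ {z₀})ᶜ := by simp
  have hmem : ({z : ℂ | Q.IsRoot z} \ {z₀})ᶜ ∈ 𝓝 z₀ := hcl.isOpen_compl.mem_nhds hz₀
  filter_upwards [nhdsWithin_le_nhds hmem, self_mem_nhdsWithin] with z h1 h2
  simp only [mem_compl_iff, mem_diff, not_and, not_not] at h1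
  intro hzero
  exact h2 (h1 hzero)

-- value of f at a zero of Q
lemma f_zero_of_Q {f : OnePoint ℂ → OnePoint ℂ} {P Q : ℂ[X]} (hfc : Continuous f) (hQ : Q ≠ 0)
    (heval : ∀ z : ℂ, Q.eval z ≠ 0 → f (z : OnePoint ℂ) = ((P.eval z / Q.eval z : ℂ) : OnePoint ℂ))
    {z₀ : ℂ} (hQz : Q.eval z₀ = 0) (hPz : P.eval z₀ ≠ 0) :
    f z₀ = ∞ := by
  have hcoe : Tendsto ((↑·) : ℂ → OnePoint ℂ) (𝓝[≠] z₀) (𝓝 (z₀ : OnePoint ℂ)) :=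
    ((continuous_coe).tendsto z₀).mono_left nhdsWithin_le_nhds
  have h1 : Tendsto (fun z : ℂ => f ↑z) (𝓝[≠] z₀) (𝓝 (f ↑z₀)) :=
    (hfc.tendsto _).comp hcoe
  -- the quotient tends to infinity
  have hnorm : Tendsto (fun z : ℂ => ‖P.eval z / Q.eval z‖) (𝓝[≠] z₀) atTop := by
    have hP : Tendsto (fun z : ℂ => ‖P.eval z‖) (𝓝[≠] z₀) (𝓝 ‖P.eval z₀‖) :=
      (P.continuous.norm.tendsto z₀).mono_left nhdsWithin_le_nhds
    have hQ0 : Tendsto (fun z : ℂ => ‖Q.eval z‖) (𝓝[≠] z₀) (𝓝[>] 0) := by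
      rw [tendsto_nhdsWithin_iff]
      constructor
      · have := (Q.continuous.norm.tendsto z₀).mono_left (nhdsWithin_le_nhds (s := {z₀}ᶜ))
        simpa [hQz] using this
      · filter_upwards [eventually_ne_punctured hQ z₀] with z hz
        simpa using hz
    have hinv : Tendsto (fun z : ℂ => ‖Q.eval z‖⁻¹) (𝓝[≠] z₀) atTop :=
      tendsto_inv_nhdsGT_zero.comp hQ0
    have := Tendsto.pos_mul_atTop (norm_pos_iff.2 hPz) hP hinv
    refine this.congr fun z => ?_
    rw [norm_div, div_eq_mul_inv]
  have h2 : Tendsto (fun z : ℂ => f ↑z) (𝓝[≠] z₀) (𝓝 ∞) := by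
    have hq : Tendsto (fun z : ℂ => ((P.eval z / Q.eval z : ℂ) : OnePoint ℂ)) (𝓝[≠] z₀) (𝓝 ∞) := by
      have hcb : Tendsto (fun z : ℂ => (P.eval z / Q.eval z : ℂ)) (𝓝[≠] z₀) (cobounded ℂ) :=
        tendsto_norm_atTop_iff_cobounded.1 hnorm
      have : Tendsto ((↑·) : ℂ → OnePoint ℂ) (cobounded ℂ) (𝓝 ∞) := by
        rw [← cobounded_eq_coclosed]; exact tendsto_coe_infty
      exact this.comp hcb
    refine hq.congr' ?_
    filter_upwards [eventually_ne_punctured hQ z₀] with z hz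
    exact (heval z hz).symm
  exact tendsto_nhds_unique h1 h2

lemma winv (P Q : ℂ[X]) (w : ℂ) :
    derivative (P - C w * Q) * Q - (P - C w * Q) * derivative Q
      = derivative P * Q - P * derivative Q := by
  rw [derivative_sub, derivative_C_mul]; ring

lemma eval_coprime_ne {P Q : ℂ[X]} (hco : IsCoprime P Q) {z : ℂ} (hQz : Q.eval z = 0) :
    P.eval z ≠ 0 := by
  obtain ⟨u, v, huv⟩ := hco
  intro hPz
  have := congrArg (eval z) huv
  simp [hPz, hQz] at this

lemma ram_key {f : OnePoint ℂ → OnePoint ℂ} {P Q : ℂ[X]} {d : ℕ} (hd : 2 ≤ d)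
    (hfc : Continuous f) (hco : IsCoprime P Q)
    (hnc : ¬(P.natDegree = 0 ∧ Q.natDegree = 0)) (hQ : Q ≠ 0)
    (hdeg : d = max P.natDegree Q.natDegree)
    (heval : ∀ z : ℂ, Q.eval z ≠ 0 → f (z : OnePoint ℂ) = ((P.eval z / Q.eval z : ℂ) : OnePoint ℂ))
    {e a : OnePoint ℂ} (hpre : f ⁻¹' {e} = {a}) :
    (∀ z : ℂ, a = (z : OnePoint ℂ) →
      (X - C z) ^ (d - 1) ∣ (derivative P * Q - P * derivative Q)) ∧
    (a = ∞ → (derivative P * Q - P * derivative Q).natDegree ≤ d - 1) := by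
  have hfa : f a = e := by
    have ha : a ∈ ({a} : Set (OnePoint ℂ)) := rfl
    rw [← hpre] at ha
    exact ha
  have hmem : ∀ x : OnePoint ℂ, f x = e → x = a := by
    intro x hx
    have : x ∈ f ⁻¹' {e} := hx
    rw [hpre] at this
    exact this
  constructor
  · rintro z rfl
    by_cases hQz : Q.eval z = 0
    · -- e = ∞, Q = c (X - z)^d
      have hPz : P.eval z ≠ 0 := eval_coprime_ne hco hQz
      have he : e = ∞ := by rw [← hfa]; exact f_zero_of_Q hfc hQ heval hQz hPz
      have hroots : ∀ u : ℂ, Q.eval u = 0 → u = z := by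
        intro u hu
        have hPu : P.eval u ≠ 0 := eval_coprime_ne hco hu
        have : f ↑u = e := by rw [he]; exact f_zero_of_Q hfc hQ heval hu hPu
        exact OnePoint.coe_injective (hmem _ this)
      have hq1 : 1 ≤ Q.natDegree := by
        by_contra h0
        have h0' : Q.natDegree = 0 := by omega
        have := eq_C_of_natDegree_eq_zero h0'
        rw [this] at hQz
        simp at hQz
        exact hQ (by rw [this, hQz, map_zero])
      have hqd : Q.natDegree = d := by
        by_contra hne
        have hq : Q.natDegree < d := by
          have : Q.natDegree ≤ d := hdeg ▸ le_max_right _ _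
          omega
        have hp : P.natDegree = d := by
          have := hdeg
          omega
        have hP0 : P ≠ 0 := fun h => hPz (by rw [h]; simp)
        have hC : Tendsto (fun u : ℂ => ((P.eval u / Q.eval u : ℂ) : OnePoint ℂ))
            (cobounded ℂ) (𝓝 ∞) := by
          have hcb : Tendsto (fun u : ℂ => (P.eval u / Q.eval u : ℂ)) (cobounded ℂ)
              (cobounded ℂ) :=
            tendsto_norm_atTop_iff_cobounded.1 (tendsto_ratio_atTop hP0 hQ (by omega))
          have hcoe : Tendsto ((↑·) : ℂ → OnePoint ℂ) (cobounded ℂ) (𝓝 ∞) := by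
            rw [← cobounded_eq_coclosed]; exact tendsto_coe_infty
          exact hcoe.comp hcb
        have hfi : f ∞ = ∞ := f_infty_eq hfc hQ heval hC
        have : (∞ : OnePoint ℂ) = ↑z := hmem _ (by rw [hfi, he])
        exact (OnePoint.coe_ne_infty z) this.symm
      have hQpow : Q = C Q.leadingCoeff * (X - C z) ^ d := by
        have := eq_pow_of_roots_subset hroots
        rwa [hqd] at this
      have hdvd := pow_dvd_wronskian (c := Q.leadingCoeff) (a := z) (k := d) (by omega) P
      rw [← hQpow] at hdvd
      have heqW : derivative P * Q - P * derivative Q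
          = -(derivative Q * P - Q * derivative P) := by ring
      rw [heqW]
      exact hdvd.neg_right
    · -- e = ↑(P z / Q z)
      set w : ℂ := P.eval z / Q.eval z with hw
      have he : e = ↑w := by rw [← hfa]; exact heval z hQz
      set A : ℂ[X] := P - C w * Q with hA
      have hAz : A.eval z = 0 := by
        simp only [hA, eval_sub, eval_mul, eval_C, hw]
        field_simp
        ring
      have hA0 : A ≠ 0 := by
        intro h0
        have hPQ : P = C w * Q := by
          have := congrArg (· + C w * Q) h0
          simpa [hA, sub_add_cancel] using this
        have hu : IsUnit Q := hco.isUnit_of_dvd' ⟨C w, by rw [hPQ]; ring⟩ dvd_rfl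
        have hq0 : Q.natDegree = 0 := natDegree_eq_zero_of_isUnit hu
        have hp0 : P.natDegree = 0 := by
          rw [hPQ]
          refine le_antisymm (le_trans (natDegree_mul_le) ?_) (Nat.zero_le _)
          simp [hq0]
        exact hnc ⟨hp0, hq0⟩
      have hroots : ∀ u : ℂ, A.eval u = 0 → u = z := by
        intro u hu
        have hQu : Q.eval u ≠ 0 := by
          intro hQu0
          have hPu : P.eval u = 0 := by
            have : P.eval u - w * Q.eval u = 0 := by simpa [hA] using hu
            rw [hQu0] at this; simpa using this
          exact eval_coprime_ne hco hQu0 hPu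
        have hval : P.eval u / Q.eval u = w := by
          have : P.eval u - w * Q.eval u = 0 := by simpa [hA] using hu
          field_simp
          linear_combination this
        have : f ↑u = e := by rw [heval u hQu, hval, he]
        exact OnePoint.coe_injective (hmem _ this)
      have hk1 : 1 ≤ A.natDegree := by
        by_contra h0
        have h0' : A.natDegree = 0 := by omega
        have := eq_C_of_natDegree_eq_zero h0'
        rw [this] at hAz
        simp at hAz
        exact hA0 (by rw [this, hAz, map_zero])
      have hkle : A.natDegree ≤ d := by
        refine le_trans (natDegree_sub_le _ _) ?_
        have h1 : (C w * Q).natDegree ≤ Q.natDegree := le_trans natDegree_mul_le (by simp)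
        have : P.natDegree ≤ d := hdeg ▸ le_max_left _ _
        have : Q.natDegree ≤ d := hdeg ▸ le_max_right _ _
        simp only [sup_le_iff]
        omega
      have hkd : A.natDegree = d := by
        by_contra hne
        have hklt : A.natDegree < d := by omega
        have hqd : Q.natDegree = d := by
          by_contra hq
          have hqlt : Q.natDegree < d := by
            have : Q.natDegree ≤ d := hdeg ▸ le_max_right _ _
            omega
          have hpd : P.natDegree = d := by have := hdeg; omega
          have hCw : (C w * Q).natDegree ≤ Q.natDegree := le_trans natDegree_mul_le (by simp)
          have hlt : (C w * Q).natDegree < P.natDegree := by omega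
          have := natDegree_sub_eq_left_of_natDegree_lt hlt
          rw [← hA] at this
          omega
        have hC : Tendsto (fun u : ℂ => ((P.eval u / Q.eval u : ℂ) : OnePoint ℂ))
            (cobounded ℂ) (𝓝 (↑w : OnePoint ℂ)) := by
          have h0 : Tendsto (fun u : ℂ => A.eval u / Q.eval u + w) (cobounded ℂ) (𝓝 w) := by
            have := (tendsto_ratio_zero hQ (by omega : A.natDegree < Q.natDegree)).add
              (tendsto_const_nhds (x := w))
            simpa using this
          have heq : ∀ᶠ u : ℂ in cobounded ℂ, A.eval u / Q.eval u + w = P.eval u / Q.eval u := by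
            filter_upwards [eventually_cobounded_ne hQ] with u hu
            simp only [hA, eval_sub, eval_mul, eval_C]
            field_simp
            ring
          have h1 : Tendsto (fun u : ℂ => P.eval u / Q.eval u) (cobounded ℂ) (𝓝 w) :=
            Tendsto.congr' heq h0
          exact ((continuous_coe).tendsto w).comp h1
        have hfi : f ∞ = ↑w := f_infty_eq hfc hQ heval hC
        have : (∞ : OnePoint ℂ) = ↑z := hmem _ (by rw [hfi, he])
        exact (OnePoint.coe_ne_infty z) this.symm
      have hApow : A = C A.leadingCoeff * (X - C z) ^ d := by
        have := eq_pow_of_roots_subset hroots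
        rwa [hkd] at this
      have hdvd := pow_dvd_wronskian (c := A.leadingCoeff) (a := z) (k := d) (by omega) Q
      rw [← hApow] at hdvd
      rwa [winv P Q w] at hdvd
  · rintro rfl
    rcases he : e with _ | w
    · -- e = ∞ : Q has no roots
      subst he
      have hroots : ∀ u : ℂ, Q.eval u ≠ 0 := by
        intro u hu
        have hPu : P.eval u ≠ 0 := eval_coprime_ne hco hu
        have : f ↑u = ∞ := f_zero_of_Q hfc hQ heval hu hPu
        exact (OnePoint.coe_ne_infty u) (hmem _ this)
      have hq0 : Q.natDegree = 0 := by
        by_contra h0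
        have : 0 < Q.degree := natDegree_pos_iff_degree_pos.1 (by omega)
        obtain ⟨u, hu⟩ := Complex.exists_root this
        exact hroots u hu
      obtain ⟨c, hc⟩ : ∃ c, Q = C c := ⟨Q.coeff 0, eq_C_of_natDegree_eq_zero hq0⟩
      have hpd : P.natDegree = d := by have := hdeg; omega
      rw [hc]
      simp only [derivative_C, mul_zero, sub_zero]
      refine le_trans natDegree_mul_le ?_
      have := natDegree_derivative_le P
      simp [natDegree_C]
      omega
    · -- e = ↑w
      subst he
      set A : ℂ[X] := P - C w * Q with hA
      have hA0 : A ≠ 0 := by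
        intro h0
        have hPQ : P = C w * Q := by
          have := congrArg (· + C w * Q) h0
          simpa [hA, sub_add_cancel] using this
        have hu : IsUnit Q := hco.isUnit_of_dvd' ⟨C w, by rw [hPQ]; ring⟩ dvd_rfl
        have hq0 : Q.natDegree = 0 := natDegree_eq_zero_of_isUnit hu
        have hp0 : P.natDegree = 0 := by
          rw [hPQ]
          refine le_antisymm (le_trans (natDegree_mul_le) ?_) (Nat.zero_le _)
          simp [hq0]
        exact hnc ⟨hp0, hq0⟩
      have hroots : ∀ u : ℂ, A.eval u ≠ 0 := by
        intro u hu
        have hQu : Q.eval u ≠ 0 := by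
          intro hQu0
          have hPu : P.eval u = 0 := by
            have : P.eval u - w * Q.eval u = 0 := by simpa [hA] using hu
            rw [hQu0] at this; simpa using this
          exact eval_coprime_ne hco hQu0 hPu
        have hval : P.eval u / Q.eval u = w := by
          have : P.eval u - w * Q.eval u = 0 := by simpa [hA] using hu
          field_simp
          linear_combination this
        have : f ↑u = ↑w := by rw [heval u hQu, hval]
        exact (OnePoint.coe_ne_infty u) (hmem _ this)
      have hk0 : A.natDegree = 0 := by
        by_contra h0
        have : 0 < A.degree := natDegree_pos_iff_degree_pos.1 (by omega)
        obtain ⟨u, hu⟩ := Complex.exists_root this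
        exact hroots u hu
      have hq1 : Q.natDegree ≠ 0 := by
        intro hq0
        have hp0 : P.natDegree = 0 := by
          have hPA : P = A + C w * Q := by rw [hA]; ring
          rw [hPA]
          refine le_antisymm (le_trans (natDegree_add_le _ _) ?_) (Nat.zero_le _)
          have h1 : (C w * Q).natDegree ≤ Q.natDegree := le_trans natDegree_mul_le (by simp)
          simp only [sup_le_iff]
          omega
        exact hnc ⟨hp0, hq0⟩
      have hqd : Q.natDegree = d := by
        have hple : P.natDegree ≤ Q.natDegree := by
          have hPA : P = A + C w * Q := by rw [hA]; ring
          rw [hPA]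
          refine le_trans (natDegree_add_le _ _) ?_
          have h1 : (C w * Q).natDegree ≤ Q.natDegree := le_trans natDegree_mul_le (by simp)
          simp only [sup_le_iff]
          omega
        have := hdeg
        omega
      obtain ⟨c, hc⟩ : ∃ c, A = C c := ⟨A.coeff 0, eq_C_of_natDegree_eq_zero hk0⟩
      have hW : derivative P * Q - P * derivative Q = -(C c * derivative Q) := by
        rw [← winv P Q w, ← hA, hc]
        simp only [derivative_C]
        ring
      rw [hW, natDegree_neg]
      refine le_trans natDegree_mul_le ?_
      have := natDegree_derivative_le Q
      simp [natDegree_C]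
      omega

lemma onePoint_cases (x : OnePoint ℂ) : x = ∞ ∨ ∃ z : ℂ, x = ↑z := by
  cases x with
  | infty => exact Or.inl rfl
  | coe z => exact Or.inr ⟨z, rfl⟩

lemma count_aux {W : ℂ[X]} {d : ℕ} (hW0 : W ≠ 0) {u v : ℂ} (huv : u ≠ v)
    (hu : (X - C u) ^ (d - 1) ∣ W) (hv : (X - C v) ^ (d - 1) ∣ W) :
    2 * (d - 1) ≤ W.natDegree := by
  have hcop : IsCoprime ((X - C u) ^ (d - 1)) ((X - C v) ^ (d - 1)) :=
    (isCoprime_X_sub_C_of_isUnit_sub (by simpa using sub_ne_zero.2 huv)).pow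
  have hdvd : (X - C u) ^ (d - 1) * (X - C v) ^ (d - 1) ∣ W := hcop.mul_dvd hu hv
  have := natDegree_le_of_dvd hdvd hW0
  rw [natDegree_mul (pow_ne_zero _ (X_sub_C_ne_zero u)) (pow_ne_zero _ (X_sub_C_ne_zero v)),
    natDegree_pow, natDegree_pow, natDegree_X_sub_C, natDegree_X_sub_C, mul_one] at this
  omega

lemma count_aux3 {W : ℂ[X]} {d : ℕ} (hW0 : W ≠ 0) {u v t : ℂ} (huv : u ≠ v) (hut : u ≠ t)
    (hvt : v ≠ t) (hu : (X - C u) ^ (d - 1) ∣ W) (hv : (X - C v) ^ (d - 1) ∣ W)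
    (ht : (X - C t) ^ (d - 1) ∣ W) :
    3 * (d - 1) ≤ W.natDegree := by
  have cop12 : IsCoprime ((X - C u) ^ (d - 1)) ((X - C v) ^ (d - 1)) :=
    (isCoprime_X_sub_C_of_isUnit_sub (by simpa using sub_ne_zero.2 huv)).pow
  have cop13 : IsCoprime ((X - C u) ^ (d - 1)) ((X - C t) ^ (d - 1)) :=
    (isCoprime_X_sub_C_of_isUnit_sub (by simpa using sub_ne_zero.2 hut)).pow
  have cop23 : IsCoprime ((X - C v) ^ (d - 1)) ((X - C t) ^ (d - 1)) :=
    (isCoprime_X_sub_C_of_isUnit_sub (by simpa using sub_ne_zero.2 hvt)).pow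
  have hdvd : ((X - C u) ^ (d - 1) * (X - C v) ^ (d - 1)) * (X - C t) ^ (d - 1) ∣ W :=
    (cop13.mul_left cop23).mul_dvd (cop12.mul_dvd hu hv) ht
  have := natDegree_le_of_dvd hdvd hW0
  rw [natDegree_mul (mul_ne_zero (pow_ne_zero _ (X_sub_C_ne_zero u))
      (pow_ne_zero _ (X_sub_C_ne_zero v))) (pow_ne_zero _ (X_sub_C_ne_zero t)),
    natDegree_mul (pow_ne_zero _ (X_sub_C_ne_zero u)) (pow_ne_zero _ (X_sub_C_ne_zero v)),
    natDegree_pow, natDegree_pow, natDegree_pow, natDegree_X_sub_C, natDegree_X_sub_C,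
    natDegree_X_sub_C, mul_one] at this
  omega

lemma final_count {W : ℂ[X]} {d : ℕ} (hd : 2 ≤ d) (hW0 : W ≠ 0)
    (hWdeg : W.natDegree ≤ 2 * d - 2)
    {a₁ a₂ a₃ : OnePoint ℂ} (h12 : a₁ ≠ a₂) (h13 : a₁ ≠ a₃) (h23 : a₂ ≠ a₃)
    (H : ∀ a ∈ ({a₁, a₂, a₃} : Set (OnePoint ℂ)),
      (∀ z : ℂ, a = (z : OnePoint ℂ) → (X - C z) ^ (d - 1) ∣ W) ∧
      (a = ∞ → W.natDegree ≤ d - 1)) : False := by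
  have H1 := H a₁ (by simp)
  have H2 := H a₂ (by simp)
  have H3 := H a₃ (by simp)
  rcases onePoint_cases a₁ with h1 | ⟨u, hu⟩
  · rcases onePoint_cases a₂ with h2 | ⟨u, hu⟩
    · exact h12 (h1.trans h2.symm)
    · rcases onePoint_cases a₃ with h3 | ⟨v, hv⟩
      · exact h13 (h1.trans h3.symm)
      · have huv : u ≠ v := fun h => h23 (by rw [hu, hv, h])
        have := count_aux hW0 huv (H2.1 u hu) (H3.1 v hv)
        have := H1.2 h1
        omega
  · rcases onePoint_cases a₂ with h2 | ⟨v, hv⟩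
    · rcases onePoint_cases a₃ with h3 | ⟨v, hv⟩
      · exact h23 (h2.trans h3.symm)
      · have huv : u ≠ v := fun h => h13 (by rw [hu, hv, h])
        have := count_aux hW0 huv (H1.1 u hu) (H3.1 v hv)
        have := H2.2 h2
        omega
    · rcases onePoint_cases a₃ with h3 | ⟨t, ht⟩
      · have huv : u ≠ v := fun h => h12 (by rw [hu, hv, h])
        have := count_aux hW0 huv (H1.1 u hu) (H2.1 v hv)
        have := H3.2 h3
        omega
      · have huv : u ≠ v := fun h => h12 (by rw [hu, hv, h])
        have hut : u ≠ t := fun h => h13 (by rw [hu, ht, h])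
        have hvt : v ≠ t := fun h => h23 (by rw [hv, ht, h])
        have := count_aux3 hW0 huv hut hvt (H1.1 u hu) (H2.1 v hv) (H3.1 t ht)
        omega

end RatMapAux

theorem finite_completelyInvariant_encard_le_two
    (f : OnePoint ℂ → OnePoint ℂ) (d : ℕ) (hd : 2 ≤ d) (hf : IsRationalMap f d)
    (E : Set (OnePoint ℂ)) (hEfin : E.Finite)
    (hpre : f ⁻¹' E = E) (him : f '' E = E) :
    E.encard ≤ 2 := by
  obtain ⟨hfc, P, Q, hco, hnc, hQ, hdeg, heval⟩ := hf
  by_contra hgt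
  push_neg at hgt
  have h3 : (3 : ℕ∞) ≤ E.encard := by
    have := (ENat.add_one_le_iff (by norm_num : (2 : ℕ∞) ≠ ⊤)).2 hgt
    calc (3 : ℕ∞) = 2 + 1 := by norm_num
      _ ≤ _ := this
  obtain ⟨t, htE, ht3⟩ := Set.exists_subset_encard_eq h3
  obtain ⟨x, y, z, hxy, hxz, hyz, rfl⟩ := Set.encard_eq_three.1 ht3
  have hxE : x ∈ E := htE (by simp)
  have hyE : y ∈ E := htE (by simp)
  have hzE : z ∈ E := htE (by simp)
  have hmapsTo : MapsTo f E E := fun a ha => by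
    rw [← hpre] at ha; exact ha
  have hsurj : SurjOn f E E := by rw [SurjOn, him]
  have hinj : InjOn f E := ((hEfin.surjOn_iff_bijOn_of_mapsTo hmapsTo).1 hsurj).injOn
  have hpreim : ∀ e ∈ E, ∃ a ∈ E, f ⁻¹' {e} = {a} := by
    intro e he
    have he' : e ∈ f '' E := by rw [him]; exact he
    obtain ⟨a, haE, hfa⟩ := he'
    refine ⟨a, haE, ?_⟩
    ext b
    simp only [mem_preimage, mem_singleton_iff]
    constructor
    · intro hb
      have hbE : b ∈ E := by
        rw [← hpre]
        simp only [mem_preimage, hb]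
        exact he
      exact hinj hbE haE (by rw [hb, hfa])
    · rintro rfl; exact hfa
  obtain ⟨a₁, ha₁E, hp₁⟩ := hpreim x hxE
  obtain ⟨a₂, ha₂E, hp₂⟩ := hpreim y hyE
  obtain ⟨a₃, ha₃E, hp₃⟩ := hpreim z hzE
  have hfa₁ : f a₁ = x := by
    have : a₁ ∈ f ⁻¹' {x} := by rw [hp₁]; rfl
    exact this
  have hfa₂ : f a₂ = y := by
    have : a₂ ∈ f ⁻¹' {y} := by rw [hp₂]; rfl
    exact this
  have hfa₃ : f a₃ = z := by
    have : a₃ ∈ f ⁻¹' {z} := by rw [hp₃]; rfl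
    exact this
  have h12 : a₁ ≠ a₂ := fun h => hxy (by rw [← hfa₁, ← hfa₂, h])
  have h13 : a₁ ≠ a₃ := fun h => hxz (by rw [← hfa₁, ← hfa₃, h])
  have h23 : a₂ ≠ a₃ := fun h => hyz (by rw [← hfa₂, ← hfa₃, h])
  have hW0 := wronskian_ne_zero hco hnc
  have hWdeg := natDegree_wronskian_le hd hdeg
  refine final_count hd hW0 hWdeg h12 h13 h23 ?_
  intro a ha
  rcases ha with rfl | rfl | rfl
  · exact ram_key hd hfc hco hnc hQ hdeg heval hp₁
  · exact ram_key hd hfc hco hnc hQ hdeg heval hp₂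
  · exact ram_key hd hfc hco hnc hQ hdeg heval hp₃
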